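/- The range (column space) of ρ₆₆ equals the 6-dimensional subspace of ℂ⁹ consisting of all vectors V = (V₀,…,V₈) satisfying V₆ = V₂ + V₄, V₇ = −V₅ and V₈ = V₁ + 2V₃ − V₀; equivalently, all vectors of the form (A, B, C, D, E, F, C+E, −F, B+2D−A) with A, B, C, D, E, F ∈ ℂ. -/

import Mathlib

open Matrix ComplexOrder

noncomputable def N66 : Matrix (Fin 9) (Fin 9) ℂ :=
  !![1, 0, 0, 0, 0, 0, 0, 0, -1;
     0, 2, 0, -1, 0, 0, 0, 0, 0;
     0, 0, 1, 0, 0, 0, 1, 0, 0;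
     0, -1, 0, 1, 0, 0, 0, 0, 1;
     0, 0, 0, 0, 1, 0, 1, 0, 0;
     0, 0, 0, 0, 0, 1, 0, -1, 0;
     0, 0, 1, 0, 1, 0, 2, 0, 0;
     0, 0, 0, 0, 0, -1, 0, 1, 0;
     -1, 0, 0, 1, 0, 0, 0, 0, 3]

/-- The index map `(i, j) ↦ 3 i + j` from `Fin 3 × Fin 3` to `Fin 9`. -/
def idx (p : Fin 3 × Fin 3) : Fin 9 :=
  ⟨3 * p.1.val + p.2.val, by have h1 := p.1.isLt; have h2 := p.2.isLt; omega⟩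

/-- The state `ρ₆₆`, viewed as an operator on `ℂ³ ⊗ ℂ³`. -/
noncomputable def rho66 : Matrix (Fin 3 × Fin 3) (Fin 3 × Fin 3) ℂ :=
  fun p q => (1 / 13 : ℂ) * N66 (idx p) (idx q)

set_option maxHeartbeats 1600000 in
/-- The range of `ρ₆₆` consists exactly of the vectors
`(A, B, C, D, E, F, C+E, -F, B+2D-A)`, i.e. those `V` with
`V₆ = V₂ + V₄`, `V₇ = -V₅` and `V₈ = V₁ + 2V₃ - V₀`. -/
theorem rho66_range :
    ∀ V : Fin 3 × Fin 3 → ℂ,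
      V ∈ LinearMap.range rho66.mulVecLin ↔
        (V (2, 0) = V (0, 2) + V (1, 1) ∧ V (2, 1) = -V (1, 2) ∧
          V (2, 2) = V (0, 1) + 2 * V (1, 0) - V (0, 0)) := by
  intro V
  constructor
  · rintro ⟨W, rfl⟩
    refine ⟨?_, ?_, ?_⟩ <;>
    · simp only [mulVecLin_apply, mulVec, dotProduct, rho66, N66, idx,
        Fintype.sum_prod_type, Fin.sum_univ_three]
      norm_num [Matrix.cons_val_zero, Matrix.cons_val_one, Matrix.head_cons,
        Matrix.cons_val_fin_one, Matrix.head_fin_const]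
      ring
  · rintro ⟨h6, h7, h8⟩
    refine ⟨fun p => ![![13 * V (0, 0), 13 * V (0, 1) + 13 * V (1, 0), 13 * V (0, 2)],
      ![13 * V (0, 1) + 26 * V (1, 0), 13 * V (1, 1), 13 * V (1, 2)],
      ![0, 0, 0]] p.1 p.2, ?_⟩
    funext p
    have hp : p = (0,0) ∨ p = (0,1) ∨ p = (0,2) ∨ p = (1,0) ∨ p = (1,1) ∨
        p = (1,2) ∨ p = (2,0) ∨ p = (2,1) ∨ p = (2,2) := by
      rcases p with ⟨i, j⟩; fin_cases i <;> fin_cases j <;> simp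
    rcases hp with rfl|rfl|rfl|rfl|rfl|rfl|rfl|rfl|rfl <;>
    · simp only [mulVecLin_apply, mulVec, dotProduct, rho66, N66, idx,
        Fintype.sum_prod_type, Fin.sum_univ_three]
      norm_num [Matrix.cons_val_zero, Matrix.cons_val_one, Matrix.head_cons,
        Matrix.cons_val_two, Matrix.tail_cons]
      first
      | ring1
      | ((simp only [show (0 : Fin 3 × Fin 3) = (0, 0) from rfl,
          show (1 : Fin 3 × Fin 3) = (1, 1) from rfl, h6, h7, h8]; try ring1))
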